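/- Let p ≥ 5 be a prime and n a positive integer, and let X_1, …, X_p ⊆ 𝔽_p^n be such that every cycle (x_1, …, x_p) ∈ X_1 × ⋯ × X_p satisfies x_1 = x_2. Let ℳ' = (x_{1,i}, x_{2,i}, …, x_{p,i})_{i=1}^{M} be a collection of pairwise disjoint cycles in X_1 × ⋯ × X_p such that for any two distinct indices i ≠ i' and any j ∈ {3, …, p}, the pair (x_{1,i}, x_{j,i'}) is not j-extendable. Then ℳ' is a p-colored sum-free set in 𝔽_p^n. -/
import Mathlib


/-- Suppose `X_1, …, X_p ⊆ 𝔽_p^n` are such that every cycle (p-tuple summing to zero)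
`(x_1, …, x_p) ∈ X_1 × ⋯ × X_p` satisfies `x_1 = x_2`. Let
`ℳ' = (x_{1,i}, …, x_{p,i})_{i=1}^M` be a collection of pairwise disjoint cycles in
`X_1 × ⋯ × X_p` such that for any distinct `i ≠ i'` and any `j ∈ {3, …, p}`, the pair
`(x_{1,i}, x_{j,i'})` is not `j`-extendable. Then `ℳ'` is a `p`-colored sum-free set in
`𝔽_p^n`: for all `i_1, …, i_p`, `x_{1,i_1} + ⋯ + x_{p,i_p} = 0` iff `i_1 = ⋯ = i_p`. -/
theorem stmt11 {p n : ℕ} (hp : p.Prime) (hp5 : 5 ≤ p) (hn : 0 < n)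
    (X : Fin p → Set (Fin n → ZMod p))
    (hX : ∀ x : Fin p → (Fin n → ZMod p), (∀ i, x i ∈ X i) → ∑ i, x i = 0 →
      x ⟨0, by omega⟩ = x ⟨1, by omega⟩)
    (M : ℕ) (c : Fin M → Fin p → (Fin n → ZMod p))
    (hcyc : ∀ l, (∀ i, c l i ∈ X i) ∧ ∑ i, c l i = 0)
    (hdisj : ∀ l l', l ≠ l' → ∀ i i', c l i ≠ c l' i')
    (hext : ∀ l l', l ≠ l' → ∀ j : Fin p, 2 ≤ (j : ℕ) →
      ¬ ∃ w : Fin p → (Fin n → ZMod p), (∀ i, w i ∈ X i) ∧ ∑ i, w i = 0 ∧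
        w ⟨0, by omega⟩ = c l ⟨0, by omega⟩ ∧ w j = c l' j) :
    ∀ i : Fin p → Fin M, ∑ j, c (i j) j = 0 ↔ ∀ j j', i j = i j' := by
  intro i
  constructor
  · intro hsum
    have key : ∀ j : Fin p, i j = i ⟨0, by omega⟩ := by
      intro j
      by_contra hne
      have hwX : ∀ k : Fin p, c (i k) k ∈ X k := fun k => (hcyc (i k)).1 k
      rcases lt_trichotomy (j : ℕ) 2 with h2 | h2 | h2
      · interval_cases hj : (j : ℕ)
        · exact hne (by congr 1; exact Fin.ext hj)
        · have h01 : c (i ⟨0, by omega⟩) ⟨0, by omega⟩ = c (i ⟨1, by omega⟩) ⟨1, by omega⟩ :=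
            hX (fun k => c (i k) k) hwX hsum
          have hj1 : j = ⟨1, by omega⟩ := Fin.ext hj
          exact hdisj (i ⟨1, by omega⟩) (i ⟨0, by omega⟩) (by rw [← hj1]; exact hne)
            ⟨1, by omega⟩ ⟨0, by omega⟩ h01.symm
      · exact hext (i ⟨0, by omega⟩) (i j) (fun h => hne h.symm) j (le_of_eq h2.symm)
          ⟨fun k => c (i k) k, hwX, hsum, rfl, rfl⟩
      · exact hext (i ⟨0, by omega⟩) (i j) (fun h => hne h.symm) j (le_of_lt h2)
          ⟨fun k => c (i k) k, hwX, hsum, rfl, rfl⟩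
    intro j j'
    rw [key j, key j']
  · intro h
    have : ∑ j, c (i j) j = ∑ j, c (i ⟨0, by omega⟩) j :=
      Finset.sum_congr rfl fun j _ => by rw [h j ⟨0, by omega⟩]
    rw [this]
    exact (hcyc _).2
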